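/- Let q>2 be real and set a(x) = ((q−1)e^x − e^{2x})/(e^x+q−1)³ for x≥0. Let r∈ℝ and 0<b<c<∞, let φ∈C²([b,c]) be nonnegative, and assume that w↦w·φ'(w) is nonnegative and nondecreasing on [b,c]. Define Φ(t) = ∫_{bt}^{ct} x^r · e^{−φ(x/t)} · a(x) dx for t>0. Then there is exactly one t_0∈(0,∞) such that Φ(t_0)=0. -/

import Mathlib

open MeasureTheory Filter Topology Set intervalIntegral

/-- `a(x) = ((q−1)e^x − e^{2x})/(e^x+q−1)³`. -/
noncomputable def afun (q : ℝ) (x : ℝ) : ℝ :=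
  ((q - 1) * Real.exp x - Real.exp (2 * x)) / (Real.exp x + q - 1) ^ 3

lemma denom_pos {q : ℝ} (hq : 2 < q) (x : ℝ) : 0 < Real.exp x + q - 1 := by
  nlinarith [Real.exp_pos x]

lemma afun_contDiff {q : ℝ} (hq : 2 < q) : ContDiff ℝ 2 (afun q) := by
  apply ContDiff.div
  · exact (contDiff_const.mul Real.contDiff_exp).sub
      (Real.contDiff_exp.comp (contDiff_const.mul contDiff_id))
  · exact ((Real.contDiff_exp.add contDiff_const).sub contDiff_const).pow 3
  · intro x
    exact pow_ne_zero 3 (ne_of_gt (denom_pos hq x))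

lemma afun_cont {q : ℝ} (hq : 2 < q) : Continuous (afun q) :=
  (afun_contDiff hq).continuous

lemma afun_deriv_cont {q : ℝ} (hq : 2 < q) : Continuous (deriv (afun q)) :=
  (afun_contDiff hq).continuous_deriv one_le_two

lemma afun_hasDerivAt {q : ℝ} (hq : 2 < q) (x : ℝ) :
    HasDerivAt (afun q) (deriv (afun q) x) x :=
  (((afun_contDiff hq).differentiable two_ne_zero) x).hasDerivAt

lemma exp_two_mul (x : ℝ) : Real.exp (2 * x) = Real.exp x * Real.exp x := by
  rw [two_mul, Real.exp_add]

lemma afun_pos {q : ℝ} (hq : 2 < q) {x : ℝ} (hx : Real.exp x < q - 1) : 0 < afun q x := by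
  have hd := denom_pos hq x
  apply div_pos _ (by positivity)
  rw [exp_two_mul]
  nlinarith [Real.exp_pos x]

lemma afun_neg {q : ℝ} (hq : 2 < q) {x : ℝ} (hx : q - 1 < Real.exp x) : afun q x < 0 := by
  have hd := denom_pos hq x
  apply div_neg_of_neg_of_pos _ (by positivity)
  rw [exp_two_mul]
  nlinarith [Real.exp_pos x]

lemma afun_nonneg {q : ℝ} (hq : 2 < q) {x : ℝ} (hx : Real.exp x ≤ q - 1) : 0 ≤ afun q x := by
  have hd := denom_pos hq x
  apply div_nonneg _ (by positivity)
  rw [exp_two_mul]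
  nlinarith [Real.exp_pos x]

lemma afun_nonpos {q : ℝ} (hq : 2 < q) {x : ℝ} (hx : q - 1 ≤ Real.exp x) : afun q x ≤ 0 := by
  have hd := denom_pos hq x
  apply div_nonpos_of_nonpos_of_nonneg _ (by positivity)
  rw [exp_two_mul]
  nlinarith [Real.exp_pos x]

lemma rpow_contOn {r b c : ℝ} (hb : 0 < b) :
    ContinuousOn (fun w : ℝ => w ^ r) (Icc b c) := fun w hw =>
  (Real.continuousAt_rpow_const w r (Or.inl (ne_of_gt (lt_of_lt_of_le hb hw.1)))).continuousWithinAt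

lemma gcont {r b c : ℝ} (hb : 0 < b) {φ h : ℝ → ℝ} (hφ : ContinuousOn φ (Icc b c))
    (hh : ContinuousOn h (Icc b c)) :
    ContinuousOn (fun w => w ^ r * Real.exp (-(φ w)) * h w) (Icc b c) :=
  ((rpow_contOn hb).mul (Real.continuous_exp.comp_continuousOn hφ.neg)).mul hh

lemma gintble {r b c : ℝ} (hb : 0 < b) (hbc : b ≤ c) {φ h : ℝ → ℝ}
    (hφ : ContinuousOn φ (Icc b c)) (hh : ContinuousOn h (Icc b c)) :
    IntervalIntegrable (fun w => w ^ r * Real.exp (-(φ w)) * h w) volume b c := by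
  apply ContinuousOn.intervalIntegrable
  rw [uIcc_of_le hbc]
  exact gcont hb hφ hh

lemma G_pos {q : ℝ} (hq : 2 < q) {r b c t : ℝ} (hb : 0 < b) (hbc : b < c)
    {φ : ℝ → ℝ} (hφ : ContinuousOn φ (Icc b c)) (ht : 0 < t)
    (htc : t * c ≤ Real.log (q - 1)) :
    0 < ∫ w in b..c, w ^ r * Real.exp (-(φ w)) * afun q (t * w) := by
  have hh : ContinuousOn (fun w : ℝ => afun q (t * w)) (Icc b c) :=
    ((afun_cont hq).comp (continuous_const.mul continuous_id)).continuousOn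
  apply intervalIntegral_pos_of_pos_on (gintble hb hbc.le hφ hh) _ hbc
  intro w hw
  have hw0 : 0 < w := hb.trans hw.1
  have : Real.exp (t * w) < q - 1 := by
    have h1 : t * w < t * c := by nlinarith [hw.2]
    calc Real.exp (t * w) < Real.exp (t * c) := Real.exp_lt_exp.2 h1
    _ ≤ q - 1 := by
        rw [← Real.exp_log (by linarith : (0:ℝ) < q - 1)]
        exact Real.exp_le_exp.2 htc
  have := afun_pos hq this
  positivity

lemma G_neg {q : ℝ} (hq : 2 < q) {r b c t : ℝ} (hb : 0 < b) (hbc : b < c)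
    {φ : ℝ → ℝ} (hφ : ContinuousOn φ (Icc b c)) (ht : 0 < t)
    (htb : Real.log (q - 1) ≤ t * b) :
    (∫ w in b..c, w ^ r * Real.exp (-(φ w)) * afun q (t * w)) < 0 := by
  have h : 0 < ∫ w in b..c, -(w ^ r * Real.exp (-(φ w)) * afun q (t * w)) := by
    have hh : ContinuousOn (fun w : ℝ => afun q (t * w)) (Icc b c) :=
      ((afun_cont hq).comp (continuous_const.mul continuous_id)).continuousOn
    have hI : IntervalIntegrable (fun w => -(w ^ r * Real.exp (-(φ w)) * afun q (t * w)))
        volume b c := (gintble hb hbc.le hφ hh).neg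
    apply intervalIntegral_pos_of_pos_on hI _ hbc
    intro w hw
    have hw0 : 0 < w := hb.trans hw.1
    have : q - 1 < Real.exp (t * w) := by
      have h1 : t * b < t * w := by nlinarith [hw.1]
      calc q - 1 = Real.exp (Real.log (q - 1)) :=
            (Real.exp_log (by linarith : (0:ℝ) < q - 1)).symm
      _ ≤ Real.exp (t * b) := Real.exp_le_exp.2 htb
      _ < Real.exp (t * w) := Real.exp_lt_exp.2 h1
    have hx := afun_neg hq this
    have h2 : 0 < w ^ r * Real.exp (-(φ w)) := by positivity
    nlinarith
  rw [intervalIntegral.integral_neg] at h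
  linarith

lemma subst_lemma {q r b c t : ℝ} (hb : 0 < b) (hbc : b ≤ c) (ht : 0 < t) (φ : ℝ → ℝ) :
    (∫ x in (b * t)..(c * t), x ^ r * Real.exp (-(φ (x / t))) * afun q x)
      = t * (t ^ r * ∫ w in b..c, w ^ r * Real.exp (-(φ w)) * afun q (t * w)) := by
  have h := intervalIntegral.integral_comp_mul_right
    (fun x => x ^ r * Real.exp (-(φ (x / t))) * afun q x) (ne_of_gt ht) (a := b) (b := c)
  rw [smul_eq_mul] at h
  have h2 : (∫ x in (b * t)..(c * t), x ^ r * Real.exp (-(φ (x / t))) * afun q x)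
      = t * ∫ w in b..c, (w * t) ^ r * Real.exp (-(φ (w * t / t))) * afun q (w * t) := by
    rw [h]; field_simp
  rw [h2]
  congr 1
  rw [← intervalIntegral.integral_const_mul]
  apply intervalIntegral.integral_congr
  intro w hw
  rw [uIcc_of_le hbc] at hw
  have hw0 : 0 < w := lt_of_lt_of_le hb hw.1
  simp only
  rw [Real.mul_rpow hw0.le ht.le, mul_div_cancel_right₀ _ (ne_of_gt ht), mul_comm w t]
  ring

lemma G_hasDeriv {q : ℝ} (hq : 2 < q) {r b c t : ℝ} (hb : 0 < b) (hbc : b < c)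
    {φ : ℝ → ℝ} (hφ : ContinuousOn φ (Icc b c)) (ht : 0 < t) :
    HasDerivAt (fun s => ∫ w in b..c, w ^ r * Real.exp (-(φ w)) * afun q (s * w))
      (∫ w in b..c, w ^ r * Real.exp (-(φ w)) * (w * deriv (afun q) (t * w))) t := by
  set F : ℝ → ℝ → ℝ := fun s w => w ^ r * Real.exp (-(φ w)) * afun q (s * w) with hF
  set F' : ℝ → ℝ → ℝ := fun s w => w ^ r * Real.exp (-(φ w)) * (w * deriv (afun q) (s * w))
    with hF'
  -- compact bound
  have hKcpt : IsCompact ((Icc (t/2) (3*t/2)) ×ˢ (Icc b c)) :=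
    (isCompact_Icc).prod isCompact_Icc
  have hcont2 : ContinuousOn (fun p : ℝ × ℝ => F' p.1 p.2)
      ((Icc (t/2) (3*t/2)) ×ˢ (Icc b c)) := by
    apply ContinuousOn.mul
    · apply ContinuousOn.mul
      · exact (rpow_contOn hb).comp continuous_snd.continuousOn (fun p hp => hp.2)
      · exact (Real.continuous_exp.comp_continuousOn
          ((hφ.comp continuous_snd.continuousOn (fun p hp => hp.2)).neg))
    · exact (continuous_snd.mul ((afun_deriv_cont hq).comp
        (continuous_fst.mul continuous_snd))).continuousOn
  obtain ⟨M, hM⟩ := hKcpt.exists_bound_of_continuousOn hcont2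
  have hmeas : ∀ s : ℝ, AEStronglyMeasurable (F s) (volume.restrict (uIoc b c)) := by
    intro s
    apply ContinuousOn.aestronglyMeasurable _ measurableSet_uIoc
    have : uIoc b c ⊆ Icc b c := by
      rw [uIoc_of_le hbc.le]; exact Ioc_subset_Icc_self
    exact (gcont hb hφ ((afun_cont hq).comp
      (continuous_const.mul continuous_id)).continuousOn).mono this
  have hmeas' : AEStronglyMeasurable (F' t) (volume.restrict (uIoc b c)) := by
    apply ContinuousOn.aestronglyMeasurable _ measurableSet_uIoc
    have : uIoc b c ⊆ Icc b c := by
      rw [uIoc_of_le hbc.le]; exact Ioc_subset_Icc_self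
    refine ContinuousOn.mono ?_ this
    exact gcont hb hφ (continuousOn_id.mul (((afun_deriv_cont hq).comp
      (continuous_const.mul continuous_id)).continuousOn))
  have hball : ∀ x ∈ Metric.ball t (t/2), x ∈ Icc (t/2) (3*t/2) := by
    intro x hx
    rw [Metric.mem_ball, Real.dist_eq, abs_lt] at hx
    constructor <;> linarith [hx.1, hx.2]
  have key := intervalIntegral.hasDerivAt_integral_of_dominated_loc_of_deriv_le
    (𝕜 := ℝ) (μ := volume) (F := F) (F' := F') (a := b) (b := c) (x₀ := t)
    (bound := fun _ => M) (Metric.ball_mem_nhds t (half_pos ht))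
    (Filter.Eventually.of_forall (fun s => hmeas s))
    (by
      exact gintble hb hbc.le hφ ((afun_cont hq).comp
        (continuous_const.mul continuous_id)).continuousOn)
    hmeas'
    (by
      apply Filter.Eventually.of_forall
      intro w hw x hx
      have hwI : w ∈ Icc b c := by
        rw [uIoc_of_le hbc.le] at hw; exact Ioc_subset_Icc_self hw
      exact hM (x, w) ⟨hball x hx, hwI⟩)
    intervalIntegrable_const
    (by
      apply Filter.Eventually.of_forall
      intro w hw x hx
      have h1 : HasDerivAt (fun s : ℝ => s * w) w x := by
        simpa using (hasDerivAt_id x).mul_const w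
      have h2 : HasDerivAt (fun s : ℝ => afun q (s * w))
          (deriv (afun q) (x * w) * w) x :=
        HasDerivAt.comp (h₂ := afun q) x (afun_hasDerivAt hq (x * w)) h1
      have h3 := h2.const_mul (w ^ r * Real.exp (-(φ w)))
      simp only [hF, hF']
      refine h3.congr_deriv ?_
      ring)
  exact key.2

lemma FTC_lemma {q : ℝ} (hq : 2 < q) {r b c t : ℝ} (hb : 0 < b) (hbc : b < c)
    {φ : ℝ → ℝ} (hφC2 : ContDiffOn ℝ 2 φ (Icc b c)) (ht : 0 < t) :
    (∫ w in b..c,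
      ((r+1) * (w ^ r * Real.exp (-(φ w)) * afun q (t * w))
       - (w * derivWithin φ (Icc b c) w) * (w ^ r * Real.exp (-(φ w)) * afun q (t * w))
       + t * (w ^ r * Real.exp (-(φ w)) * (w * deriv (afun q) (t * w)))))
    = c ^ (r+1) * Real.exp (-(φ c)) * afun q (t * c)
      - b ^ (r+1) * Real.exp (-(φ b)) * afun q (t * b) := by
  have hφ : ContinuousOn φ (Icc b c) := hφC2.continuousOn
  have hφ' : ContinuousOn (derivWithin φ (Icc b c)) (Icc b c) :=
    hφC2.continuousOn_derivWithin (uniqueDiffOn_Icc hbc) one_le_two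
  have haf : ContinuousOn (fun w : ℝ => afun q (t * w)) (Icc b c) :=
    ((afun_cont hq).comp (continuous_const.mul continuous_id)).continuousOn
  have haf' : ContinuousOn (fun w : ℝ => w * deriv (afun q) (t * w)) (Icc b c) :=
    continuousOn_id.mul (((afun_deriv_cont hq).comp
      (continuous_const.mul continuous_id)).continuousOn)
  set f : ℝ → ℝ := fun w => w ^ (r+1) * Real.exp (-(φ w)) * afun q (t * w) with hf
  apply intervalIntegral.integral_eq_sub_of_hasDeriv_right_of_le hbc.le
  · exact gcont (r := r+1) hb hφ haf
  · intro w hw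
    have hw0 : 0 < w := hb.trans hw.1
    have hmem : Icc b c ∈ 𝓝 w := Icc_mem_nhds hw.1 hw.2
    have hφdiff : DifferentiableAt ℝ φ w :=
      (hφC2.differentiableOn two_ne_zero).differentiableAt hmem
    have hφd : HasDerivAt φ (deriv φ w) w := hφdiff.hasDerivAt
    have h1 : HasDerivAt (fun w : ℝ => w ^ (r+1)) ((r+1) * w ^ r) w := by
      have := Real.hasDerivAt_rpow_const (x := w) (p := r+1) (Or.inl (ne_of_gt hw0))
      simpa [add_sub_cancel_right] using this
    have h2 : HasDerivAt (fun w => Real.exp (-(φ w)))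
        (Real.exp (-(φ w)) * (-(deriv φ w))) w := (hφd.neg).exp
    have h3 : HasDerivAt (fun w => afun q (t * w)) (deriv (afun q) (t * w) * t) w :=
      (afun_hasDerivAt hq (t * w)).comp w (by simpa using (hasDerivAt_id w).const_mul t)
    have h4 := (h1.mul h2).mul h3
    have heq : derivWithin φ (Icc b c) w = deriv φ w := derivWithin_of_mem_nhds hmem
    have hrw : w ^ (r+1) = w ^ r * w := Real.rpow_add_one (ne_of_gt hw0) r
    apply HasDerivAt.hasDerivWithinAt
    refine h4.congr_deriv ?_
    simp only [Pi.mul_apply]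
    rw [heq, hrw]
    ring
  · apply IntervalIntegrable.add
    apply IntervalIntegrable.sub
    · exact (gintble hb hbc.le hφ haf).const_mul (r+1)
    · apply ContinuousOn.intervalIntegrable
      rw [uIcc_of_le hbc.le]
      exact (continuousOn_id.mul hφ').mul (gcont hb hφ haf)
    · exact (gintble hb hbc.le hφ haf').const_mul t

lemma deriv_neg_at_zero {q : ℝ} (hq : 2 < q) {r b c t : ℝ} (hb : 0 < b) (hbc : b < c)
    {φ : ℝ → ℝ} (hφC2 : ContDiffOn ℝ 2 φ (Icc b c))
    (hψmono : MonotoneOn (fun w => w * deriv φ w) (Icc b c)) (ht : 0 < t)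
    (hzero : (∫ w in b..c, w ^ r * Real.exp (-(φ w)) * afun q (t * w)) = 0) :
    (∫ w in b..c, w ^ r * Real.exp (-(φ w)) * (w * deriv (afun q) (t * w))) < 0 := by
  have hq1 : (0:ℝ) < q - 1 := by linarith
  have hφ : ContinuousOn φ (Icc b c) := hφC2.continuousOn
  have hφ' : ContinuousOn (derivWithin φ (Icc b c)) (Icc b c) :=
    hφC2.continuousOn_derivWithin (uniqueDiffOn_Icc hbc) one_le_two
  have haf : ContinuousOn (fun w : ℝ => afun q (t * w)) (Icc b c) :=
    ((afun_cont hq).comp (continuous_const.mul continuous_id)).continuousOn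
  have haf' : ContinuousOn (fun w : ℝ => w * deriv (afun q) (t * w)) (Icc b c) :=
    continuousOn_id.mul (((afun_deriv_cont hq).comp
      (continuous_const.mul continuous_id)).continuousOn)
  -- the zero of afun lies strictly inside (t*b, t*c)
  have htb : t * b < Real.log (q - 1) := by
    by_contra h
    exact absurd hzero (ne_of_lt (G_neg hq hb hbc hφ ht (le_of_not_gt h)))
  have htc : Real.log (q - 1) < t * c := by
    by_contra h
    exact absurd hzero.symm (ne_of_lt (G_pos hq hb hbc hφ ht (le_of_not_gt h)))
  set x0 : ℝ := Real.log (q - 1) with hx0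
  set w₀ : ℝ := x0 / t with hw₀
  have htw₀ : t * w₀ = x0 := by rw [hw₀]; field_simp [ht.ne']
  have hw₀b : b < w₀ := by rw [hw₀]; rw [lt_div_iff₀ ht]; linarith [htb]
  have hw₀c : w₀ < c := by rw [hw₀]; rw [div_lt_iff₀ ht]; linarith [htc]
  have hw₀Ioo : w₀ ∈ Ioo b c := ⟨hw₀b, hw₀c⟩
  set m : ℝ → ℝ := fun w => w * derivWithin φ (Icc b c) w with hm
  set Q : ℝ → ℝ := fun w => w ^ r * Real.exp (-(φ w)) * afun q (t * w) with hQ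
  set K0 : ℝ := m w₀ with hK0
  have hm_eq : ∀ u ∈ Ioo b c, m u = u * deriv φ u := by
    intro u hu
    rw [hm]
    simp only
    rw [derivWithin_of_mem_nhds (Icc_mem_nhds hu.1 hu.2)]
  -- integrabilities
  have hQint : IntervalIntegrable Q volume b c := gintble hb hbc.le hφ haf
  have hI3int : IntervalIntegrable (fun w => m w * Q w) volume b c := by
    apply ContinuousOn.intervalIntegrable
    rw [uIcc_of_le hbc.le]
    exact (continuousOn_id.mul hφ').mul (gcont hb hφ haf)
  have hI4int : IntervalIntegrable (fun w => K0 * Q w) volume b c := hQint.const_mul K0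
  -- key inequality : I3 ≤ 0
  have hI3 : (∫ w in b..c, m w * Q w) ≤ 0 := by
    have hmono := intervalIntegral.integral_mono_ae_restrict hbc.le hI3int hI4int ?_
    · have : (∫ w in b..c, K0 * Q w) = K0 * ∫ w in b..c, Q w :=
        intervalIntegral.integral_const_mul K0 Q
      rw [this, hzero, mul_zero] at hmono
      exact hmono
    · apply (ae_restrict_iff' measurableSet_Icc).2
      have hnull : (volume : Measure ℝ) ({b, c} : Set ℝ) = 0 :=
        Set.Finite.measure_zero (Set.toFinite _) volume
      have hae2 : ∀ᵐ w : ℝ, w ∉ ({b, c} : Set ℝ) := by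
        rw [MeasureTheory.ae_iff]
        convert hnull using 2
        ext a
        simp [Set.mem_insert_iff, or_iff_not_imp_left]
      filter_upwards [hae2] with w hwnot hwmem
      simp only [Set.mem_insert_iff, Set.mem_singleton_iff, not_or] at hwnot
      have hwIoo : w ∈ Ioo b c :=
        ⟨lt_of_le_of_ne hwmem.1 (Ne.symm hwnot.1), lt_of_le_of_ne hwmem.2 hwnot.2⟩
      have hw0 : 0 < w := hb.trans hwIoo.1
      have hQbase : 0 < w ^ r * Real.exp (-(φ w)) := by positivity
      rcases le_total w w₀ with hle | hle
      · -- afun(t w) ≥ 0, m w ≤ K0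
        have haQ : 0 ≤ afun q (t * w) := by
          apply afun_nonneg hq
          rw [← Real.exp_log hq1, ← hx0, ← htw₀]
          exact Real.exp_le_exp.2 (by nlinarith)
        have hQnn : 0 ≤ Q w := by
          rw [hQ]; exact mul_nonneg hQbase.le haQ
        have hmle : m w ≤ K0 := by
          rw [hK0, hm_eq w hwIoo, hm_eq w₀ hw₀Ioo]
          exact hψmono (Ioo_subset_Icc_self hwIoo) (Ioo_subset_Icc_self hw₀Ioo) hle
        exact mul_le_mul_of_nonneg_right hmle hQnn
      · -- afun(t w) ≤ 0, K0 ≤ m w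
        have haQ : afun q (t * w) ≤ 0 := by
          apply afun_nonpos hq
          rw [← Real.exp_log hq1, ← hx0, ← htw₀]
          exact Real.exp_le_exp.2 (by nlinarith)
        have hQnp : Q w ≤ 0 := by
          rw [hQ]; exact mul_nonpos_of_nonneg_of_nonpos hQbase.le haQ
        have hmle : K0 ≤ m w := by
          rw [hK0, hm_eq w hwIoo, hm_eq w₀ hw₀Ioo]
          exact hψmono (Ioo_subset_Icc_self hw₀Ioo) (Ioo_subset_Icc_self hwIoo) hle
        exact mul_le_mul_of_nonpos_right hmle hQnp
  -- boundary terms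
  have hc0 : 0 < c := hb.trans hbc
  have hPc : c ^ (r+1) * Real.exp (-(φ c)) * afun q (t * c) < 0 := by
    have ha : afun q (t * c) < 0 := by
      apply afun_neg hq
      rw [← Real.exp_log hq1]
      exact Real.exp_lt_exp.2 htc
    have h2 : 0 < c ^ (r+1) * Real.exp (-(φ c)) := by positivity
    nlinarith
  have hPb : 0 < b ^ (r+1) * Real.exp (-(φ b)) * afun q (t * b) := by
    have ha : 0 < afun q (t * b) := by
      apply afun_pos hq
      rw [← Real.exp_log hq1]
      exact Real.exp_lt_exp.2 htb
    have h2 : 0 < b ^ (r+1) * Real.exp (-(φ b)) := by positivity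
    nlinarith
  -- combine with FTC
  have hFTC := FTC_lemma hq hb hbc hφC2 ht (r := r)
  have hAint : IntervalIntegrable (fun w => (r+1) * Q w) volume b c := hQint.const_mul _
  have hCint : IntervalIntegrable
      (fun w => t * (w ^ r * Real.exp (-(φ w)) * (w * deriv (afun q) (t * w)))) volume b c :=
    (gintble hb hbc.le hφ haf').const_mul t
  have hsplit : (∫ w in b..c,
      ((r+1) * (w ^ r * Real.exp (-(φ w)) * afun q (t * w))
       - (w * derivWithin φ (Icc b c) w) * (w ^ r * Real.exp (-(φ w)) * afun q (t * w))
       + t * (w ^ r * Real.exp (-(φ w)) * (w * deriv (afun q) (t * w)))))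
      = (∫ w in b..c, (r+1) * Q w) - (∫ w in b..c, m w * Q w)
        + (∫ w in b..c, t * (w ^ r * Real.exp (-(φ w)) * (w * deriv (afun q) (t * w)))) := by
    rw [intervalIntegral.integral_add (hAint.sub hI3int) hCint,
      intervalIntegral.integral_sub hAint hI3int]
  have hA : (∫ w in b..c, (r+1) * Q w) = 0 := by
    rw [intervalIntegral.integral_const_mul, hzero, mul_zero]
  have hC : (∫ w in b..c, t * (w ^ r * Real.exp (-(φ w)) * (w * deriv (afun q) (t * w))))
      = t * ∫ w in b..c, w ^ r * Real.exp (-(φ w)) * (w * deriv (afun q) (t * w)) :=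
    intervalIntegral.integral_const_mul t _
  rw [hsplit, hA, hC] at hFTC
  nlinarith [hFTC, hI3, hPc, hPb, ht]

lemma slope_neg_left {f : ℝ → ℝ} {d x : ℝ} (hf : HasDerivAt f d x) (hd : d < 0)
    (hx : f x = 0) : ∀ᶠ y in 𝓝[<] x, 0 < f y := by
  have h := hasDerivAt_iff_tendsto_slope.1 hf
  have h2 : ∀ᶠ y in 𝓝[≠] x, slope f x y < 0 := h.eventually_lt_const hd
  have h3 : (𝓝[<] x) ≤ (𝓝[≠] x) := nhdsWithin_mono x (fun y hy => ne_of_lt hy)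
  filter_upwards [h3 h2, self_mem_nhdsWithin] with y h1 hyx
  rw [slope_def_field, hx, sub_zero] at h1
  rcases div_neg_iff.1 h1 with ⟨h4, h5⟩ | ⟨h4, h5⟩
  · exact h4
  · exact absurd h5 (by simp only [Set.mem_Iio] at hyx; linarith)

lemma slope_neg_right {f : ℝ → ℝ} {d x : ℝ} (hf : HasDerivAt f d x) (hd : d < 0)
    (hx : f x = 0) : ∀ᶠ y in 𝓝[>] x, f y < 0 := by
  have h := hasDerivAt_iff_tendsto_slope.1 hf
  have h2 : ∀ᶠ y in 𝓝[≠] x, slope f x y < 0 := h.eventually_lt_const hd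
  have h3 : (𝓝[>] x) ≤ (𝓝[≠] x) := nhdsWithin_mono x (fun y hy => ne_of_gt hy)
  filter_upwards [h3 h2, self_mem_nhdsWithin] with y h1 hyx
  rw [slope_def_field, hx, sub_zero] at h1
  rcases div_neg_iff.1 h1 with ⟨h4, h5⟩ | ⟨h4, h5⟩
  · exact absurd h5 (by simp only [Set.mem_Ioi] at hyx; linarith)
  · exact h4

lemma no_two_zeros {Gf Df : ℝ → ℝ}
    (hderiv : ∀ t, 0 < t → HasDerivAt Gf (Df t) t)
    (hneg : ∀ t, 0 < t → Gf t = 0 → Df t < 0)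
    {u v : ℝ} (hu : 0 < u) (huv : u < v) (hGu : Gf u = 0) (hGv : Gf v = 0) : False := by
  have hv : 0 < v := hu.trans huv
  -- a point u' in (u,v) with Gf u' < 0
  have hmemuv : Ioo u v ∈ 𝓝[>] u := Ioo_mem_nhdsGT_of_mem ⟨le_refl u, huv⟩
  obtain ⟨u', hu'neg, hu'mem⟩ :=
    ((slope_neg_right (hderiv u hu) (hneg u hu hGu) hGu).and
      (eventually_mem_set.2 hmemuv)).exists
  have hu'pos : 0 < u' := hu.trans hu'mem.1
  have hu'v : u' < v := hu'mem.2
  -- the set where Gf ≥ 0 inside [u', v]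
  set S : Set ℝ := Icc u' v ∩ Gf ⁻¹' (Ici 0) with hS
  have hcont : ContinuousOn Gf (Icc u' v) := fun x hx =>
    (hderiv x (lt_of_lt_of_le hu'pos hx.1)).continuousAt.continuousWithinAt
  have hclosed : IsClosed S :=
    hcont.preimage_isClosed_of_isClosed isClosed_Icc isClosed_Ici
  have hne : S.Nonempty := ⟨v, ⟨hu'v.le, le_refl v⟩, by simp [hGv]⟩
  have hbdd : BddBelow S := ⟨u', fun x hx => hx.1.1⟩
  set s : ℝ := sInf S with hs
  have hsS : s ∈ S := hclosed.csInf_mem hne hbdd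
  have hsmem : s ∈ Icc u' v := hsS.1
  have hsG : 0 ≤ Gf s := hsS.2
  have hspos : 0 < s := lt_of_lt_of_le hu'pos hsmem.1
  have hu's : u' < s := by
    rcases lt_or_eq_of_le hsmem.1 with h | h
    · exact h
    · exact absurd hsG (by rw [← h]; linarith)
  have hlt : ∀ x ∈ Ico u' s, Gf x < 0 := by
    intro x hx
    by_contra h
    push_neg at h
    have hxS : x ∈ S := ⟨⟨hx.1, hx.2.le.trans hsmem.2⟩, h⟩
    exact absurd (csInf_le hbdd hxS) (not_le.2 hx.2)
  have hmemIoo : Ioo u' s ∈ 𝓝[<] s := Ioo_mem_nhdsLT_of_mem ⟨hu's, le_refl s⟩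
  have hGs_le : Gf s ≤ 0 := by
    have htend : Tendsto Gf (𝓝[<] s) (𝓝 (Gf s)) :=
      ((hderiv s hspos).continuousAt.tendsto).mono_left nhdsWithin_le_nhds
    apply le_of_tendsto htend
    filter_upwards [eventually_mem_set.2 hmemIoo] with x hx
    exact (hlt x ⟨hx.1.le, hx.2⟩).le
  have hGs : Gf s = 0 := le_antisymm hGs_le hsG
  obtain ⟨y, hypos, hymem⟩ :=
    ((slope_neg_left (hderiv s hspos) (hneg s hspos hGs) hGs).and
      (eventually_mem_set.2 hmemIoo)).exists
  exact absurd hypos (not_lt.2 (hlt y ⟨hymem.1.le, hymem.2⟩).le)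

/-- **Unique zero of `Φ`, compactly supported case `0 < b < c < ∞`.** -/
theorem unique_zero_crossing_compact
    (q : ℝ) (hq : 2 < q) (r : ℝ) (b c : ℝ) (hb : 0 < b) (hbc : b < c)
    (φ : ℝ → ℝ) (hφC2 : ContDiffOn ℝ 2 φ (Icc b c))
    (hφnn : ∀ w ∈ Icc b c, 0 ≤ φ w)
    (hψnn : ∀ w ∈ Icc b c, 0 ≤ w * deriv φ w)
    (hψmono : MonotoneOn (fun w => w * deriv φ w) (Icc b c)) :
    ∃! t : ℝ, 0 < t ∧
      (∫ x in (b * t)..(c * t), x ^ r * Real.exp (-(φ (x / t))) * afun q x) = 0 := by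
  have hφ : ContinuousOn φ (Icc b c) := hφC2.continuousOn
  have hc0 : 0 < c := hb.trans hbc
  set x0 : ℝ := Real.log (q - 1) with hx0
  have hx0pos : 0 < x0 := Real.log_pos (by linarith)
  set Gf : ℝ → ℝ := fun s => ∫ w in b..c, w ^ r * Real.exp (-(φ w)) * afun q (s * w)
    with hGf
  set Df : ℝ → ℝ := fun s => ∫ w in b..c, w ^ r * Real.exp (-(φ w)) * (w * deriv (afun q) (s * w))
    with hDf
  have hderiv : ∀ t, 0 < t → HasDerivAt Gf (Df t) t := fun t ht =>
    G_hasDeriv hq hb hbc hφ ht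
  have hneg : ∀ t, 0 < t → Gf t = 0 → Df t < 0 := fun t ht hz =>
    deriv_neg_at_zero hq hb hbc hφC2 hψmono ht hz
  -- endpoints for IVT
  set t1 : ℝ := x0 / (2 * c) with ht1
  set t2 : ℝ := x0 / b with ht2
  have ht1pos : 0 < t1 := by positivity
  have ht2pos : 0 < t2 := by positivity
  have ht12 : t1 < t2 := by
    rw [ht1, ht2, div_lt_div_iff₀ (by positivity) hb]
    nlinarith
  have hGt1 : 0 < Gf t1 := by
    apply G_pos hq hb hbc hφ ht1pos
    rw [ht1]
    rw [div_mul_eq_mul_div, mul_comm]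
    rw [div_le_iff₀ (by positivity)]
    nlinarith
  have hGt2 : Gf t2 < 0 := by
    apply G_neg hq hb hbc hφ ht2pos
    rw [ht2, div_mul_cancel₀ _ (ne_of_gt hb)]
  have hcont : ContinuousOn Gf (Icc t1 t2) := fun x hx =>
    (hderiv x (lt_of_lt_of_le ht1pos hx.1)).continuousAt.continuousWithinAt
  have hIVT := intermediate_value_Icc' ht12.le hcont
  have h0mem : (0:ℝ) ∈ Icc (Gf t2) (Gf t1) := ⟨hGt2.le, hGt1.le⟩
  obtain ⟨t0, ht0mem, hGt0⟩ := hIVT h0mem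
  have ht0pos : 0 < t0 := lt_of_lt_of_le ht1pos ht0mem.1
  refine ⟨t0, ⟨ht0pos, ?_⟩, ?_⟩
  · rw [subst_lemma hb hbc.le ht0pos φ (q := q) (r := r)]
    show t0 * (t0 ^ r * Gf t0) = 0
    rw [hGt0, mul_zero, mul_zero]
  · rintro y ⟨hy, hΦy⟩
    rw [subst_lemma hb hbc.le hy φ (q := q) (r := r)] at hΦy
    have hΦy2 : y * (y ^ r * Gf y) = 0 := hΦy
    have hyr : (0:ℝ) < y ^ r := Real.rpow_pos_of_pos hy r
    have hGy : Gf y = 0 := by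
      rcases mul_eq_zero.1 hΦy2 with h | h
      · exact absurd h (ne_of_gt hy)
      rcases mul_eq_zero.1 h with h' | h'
      · exact absurd h' (ne_of_gt hyr)
      · exact h'
    rcases lt_trichotomy y t0 with h | h | h
    · exact absurd (no_two_zeros hderiv hneg hy h hGy hGt0) not_false
    · exact h
    · exact absurd (no_two_zeros hderiv hneg ht0pos h hGt0 hGy) not_false
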